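/- For the autonomous Lagrangian L_a(x,y,ẋ,ẏ) = (1/2)ẋ² + 1 − cos(2πx) + (1/2)(ẏ−c)² on 𝕋² = ℝ²/ℤ², let u ∈ C(𝕋²,ℝ) satisfy min_{q ∈ {0}×𝕊¹} u(q) = min_{𝕋²} u. Then for every ỹ ∈ ℝ and every t > 0 one has min_{𝕋²} u ≤ T_t u(π(0,ỹ)) ≤ (min_{𝕋²} u) + 1/(2t); in particular T_t u(π(0,ỹ)) → min_{𝕋²} u as t → +∞. -/

import Mathlib

open Set Filter MeasureTheory

noncomputable section

/-- The two-torus `𝕋² = ℝ²/ℤ²`. -/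
abbrev T2 : Type := AddCircle (1 : ℝ) × AddCircle (1 : ℝ)

/-- The quotient map `π : ℝ² → 𝕋²`. -/
def p2 (q : ℝ × ℝ) : T2 := ((q.1 : AddCircle (1 : ℝ)), (q.2 : AddCircle (1 : ℝ)))

/-- `γ` is continuous and piecewise `C¹` on `[a,b]`. -/
def PiecewiseC1On {E : Type*} [NormedAddCommGroup E] [NormedSpace ℝ E]
    (γ : ℝ → E) (a b : ℝ) : Prop :=
  ContinuousOn γ (Set.Icc a b) ∧
  ∃ (N : ℕ) (p : Fin (N + 1) → ℝ), p 0 = a ∧ p (Fin.last N) = b ∧ Monotone p ∧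
    ∀ i : Fin N, ContDiffOn ℝ 1 γ (Set.Icc (p i.castSucc) (p i.succ))

/-- The Lagrangian `L_a(x,y,ẋ,ẏ) = ẋ²/2 + 1 − cos(2πx) + (ẏ−c)²/2`. -/
def La (c : ℝ) (q v : ℝ × ℝ) : ℝ :=
  (1 / 2) * v.1 ^ 2 + 1 - Real.cos (2 * Real.pi * q.1) + (1 / 2) * (v.2 - c) ^ 2

/-- The action of a curve for `L_a` on `[a,b]`. -/
def actionA (c : ℝ) (γ : ℝ → ℝ × ℝ) (a b : ℝ) : ℝ :=
  ∫ s in a..b, La c (γ s) (deriv γ s)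

/-- The Lax–Oleinik semigroup `T_t u (q)` for `L_a`. -/
def Tlo (c t : ℝ) (u : T2 → ℝ) (q : T2) : ℝ :=
  sInf {A : ℝ | ∃ γ : ℝ → ℝ × ℝ, PiecewiseC1On γ 0 t ∧ p2 (γ t) = q ∧
    A = u (p2 (γ 0)) + actionA c γ 0 t}

/-- `F_t(q,q')`: minimal action among curves from `q` to `q'` in time `t`. -/
def Fa (c t : ℝ) (q q' : T2) : ℝ :=
  sInf {A : ℝ | ∃ γ : ℝ → ℝ × ℝ, PiecewiseC1On γ 0 t ∧ p2 (γ 0) = q ∧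
    p2 (γ t) = q' ∧ A = actionA c γ 0 t}

/-- The Peierls barrier `h(q,q') = liminf_{t→+∞} F_t(q,q')`, written as
`sup over T of inf over t ≥ T`. -/
def hA (c : ℝ) (q q' : T2) : ℝ :=
  sSup {r : ℝ | ∃ T : ℝ, r = sInf {A : ℝ | ∃ t : ℝ, 0 < t ∧ T ≤ t ∧ A = Fa c t q q'}}

/-- The circle `{0} × 𝕊¹ ⊆ 𝕋²`. -/
def circ0 : Set T2 := {q : T2 | ∃ yt : ℝ, q = p2 (0, yt)}

/-- The function `u_δ(π(x̃,ỹ)) = max(δ − dist(ỹ − 1/2, ℤ), 0)`. -/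
def udelta (δ : ℝ) (q : T2) : ℝ :=
  max (δ - ‖q.2 - ((1 / 2 : ℝ) : AddCircle (1 : ℝ))‖) 0

/-! ### Auxiliary lemmas -/

lemma La_nonneg (c : ℝ) (q v : ℝ × ℝ) : 0 ≤ La c q v := by
  have h1 : Real.cos (2 * Real.pi * q.1) ≤ 1 := Real.cos_le_one _
  have h2 : 0 ≤ (1/2 : ℝ) * v.1 ^ 2 := by positivity
  have h3 : 0 ≤ (1/2 : ℝ) * (v.2 - c) ^ 2 := by positivity
  unfold La; linarith

lemma actionA_nonneg (c : ℝ) (γ : ℝ → ℝ × ℝ) (t : ℝ) (ht : 0 ≤ t) :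
    0 ≤ actionA c γ 0 t :=
  intervalIntegral.integral_nonneg ht (fun s _ => La_nonneg c _ _)

lemma line_deriv (y₀ m : ℝ) (s : ℝ) :
    deriv (fun s : ℝ => ((0 : ℝ), y₀ + s * m)) s = ((0 : ℝ), m) := by
  have h : HasDerivAt (fun s : ℝ => ((0 : ℝ), y₀ + s * m)) ((0 : ℝ), m) s := by
    have := ((hasDerivAt_const s y₀).add (hasDerivAt_mul_const m (x := s)))
    simpa using (hasDerivAt_const s (0 : ℝ)).prodMk ((hasDerivAt_mul_const m (x := s)).const_add y₀)
  exact h.deriv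

lemma line_pc1 (y₀ m t : ℝ) (ht : 0 ≤ t) :
    PiecewiseC1On (fun s : ℝ => ((0 : ℝ), y₀ + s * m)) 0 t := by
  have hcd : ContDiff ℝ 1 (fun s : ℝ => ((0 : ℝ), y₀ + s * m)) :=
    contDiff_const.prodMk (contDiff_const.add (contDiff_id.mul contDiff_const))
  refine ⟨hcd.continuous.continuousOn, 1, ![0, t], by simp, by simp [Fin.last], ?_, ?_⟩
  · intro i j hij
    fin_cases i <;> fin_cases j <;> simp_all
  · intro i; exact hcd.contDiffOn

lemma line_action (c y₀ m t : ℝ) :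
    actionA c (fun s : ℝ => ((0 : ℝ), y₀ + s * m)) 0 t = t * ((1/2) * (m - c)^2) := by
  unfold actionA
  have : ∀ s : ℝ, La c ((fun s : ℝ => ((0 : ℝ), y₀ + s * m)) s)
      (deriv (fun s : ℝ => ((0 : ℝ), y₀ + s * m)) s) = (1/2) * (m - c)^2 := by
    intro s
    rw [line_deriv]
    simp [La, Real.cos_zero]
  simp only [this]
  rw [intervalIntegral.integral_const]
  simp [smul_eq_mul]

/-- For `L_a` on `𝕋²` and continuous `u` with
`min_{{0}×𝕊¹} u = min_{𝕋²} u`, for every `ỹ` and `t > 0` one has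
`min_{𝕋²} u ≤ T_t u (π(0,ỹ)) ≤ min_{𝕋²} u + 1/(2t)`; in particular
`T_t u (π(0,ỹ)) → min_{𝕋²} u` as `t → +∞`. -/
theorem laxOleinik_two_sided_bound_and_limit (c : ℝ) (u : T2 → ℝ)
    (hu : Continuous u) (hmin : sInf (u '' circ0) = sInf (Set.range u)) :
    (∀ yt : ℝ, ∀ t : ℝ, 0 < t →
      sInf (Set.range u) ≤ Tlo c t u (p2 (0, yt)) ∧
      Tlo c t u (p2 (0, yt)) ≤ sInf (Set.range u) + 1 / (2 * t)) ∧
    (∀ yt : ℝ, Filter.Tendsto (fun t : ℝ => Tlo c t u (p2 (0, yt)))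
      Filter.atTop (nhds (sInf (Set.range u)))) := by
  haveI : Fact ((0:ℝ) < 1) := ⟨one_pos⟩
  have hrc : IsCompact (Set.range u) := isCompact_range hu
  have hbdd : BddBelow (Set.range u) := hrc.bddBelow
  have hle : ∀ q : T2, sInf (Set.range u) ≤ u q := fun q => csInf_le hbdd ⟨q, rfl⟩
  have hcirc : circ0 = Set.range (fun z : AddCircle (1:ℝ) => ((0 : AddCircle (1:ℝ)), z)) := by
    ext q
    constructor
    · rintro ⟨y, rfl⟩; exact ⟨(y : AddCircle (1:ℝ)), by simp [p2]⟩
    · rintro ⟨z, rfl⟩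
      obtain ⟨x, hx⟩ := QuotientAddGroup.mk_surjective z
      exact ⟨x, by simp [p2, hx]⟩
  have hc0cpt : IsCompact circ0 := by
    rw [hcirc]; exact isCompact_range (continuous_const.prodMk continuous_id)
  have hc0ne : circ0.Nonempty := ⟨p2 (0, 0), 0, rfl⟩
  obtain ⟨q₀, hq₀mem, hq₀⟩ : ∃ q₀ ∈ circ0, u q₀ = sInf (Set.range u) := by
    obtain ⟨q₀, hq₀mem, hq₀⟩ := (hc0cpt.image hu).sInf_mem (hc0ne.image u)
    exact ⟨q₀, hq₀mem, by rw [hq₀, hmin]⟩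
  obtain ⟨y₀, rfl⟩ := hq₀mem
  have key : ∀ yt t : ℝ, 0 < t →
      sInf (Set.range u) ≤ Tlo c t u (p2 (0, yt)) ∧
      Tlo c t u (p2 (0, yt)) ≤ sInf (Set.range u) + 1 / (2 * t) := by
    intro yt t ht
    set S : Set ℝ := {A : ℝ | ∃ γ : ℝ → ℝ × ℝ, PiecewiseC1On γ 0 t ∧ p2 (γ t) = p2 (0, yt) ∧
      A = u (p2 (γ 0)) + actionA c γ 0 t} with hS
    have hTlo : Tlo c t u (p2 (0, yt)) = sInf S := rfl
    have hlb : ∀ A ∈ S, sInf (Set.range u) ≤ A := by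
      rintro A ⟨γ, hγ, hend, rfl⟩
      have h1 := actionA_nonneg c γ t ht.le
      have h2 := hle (p2 (γ 0))
      linarith
    set d : ℝ := yt - y₀ - c * t with hd
    set ε : ℝ := d - round d with hε
    set m : ℝ := c + ε / t with hm
    set γ : ℝ → ℝ × ℝ := fun s => ((0 : ℝ), y₀ + s * m) with hγdef
    have hεabs : |ε| ≤ 1/2 := abs_sub_round d
    have hε2 : ε ^ 2 ≤ 1 := by
      nlinarith [abs_nonneg ε, sq_abs ε]
    have hend : p2 (γ t) = p2 (0, yt) := by
      have h1 : y₀ + t * m = yt - (round d : ℝ) := by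
        rw [hm, mul_add, mul_div_cancel₀ _ ht.ne', hε, hd]; ring
      have h2 : ((yt - (round d : ℝ) : ℝ) : AddCircle (1:ℝ)) = (yt : AddCircle (1:ℝ)) := by
        have hz : (((round d : ℝ)) : AddCircle (1:ℝ)) = 0 := by
          rw [AddCircle.coe_eq_zero_iff]; exact ⟨round d, by simp⟩
        rw [sub_eq_add_neg, QuotientAddGroup.mk_add, QuotientAddGroup.mk_neg, hz]
        simp
      simp only [p2, hγdef, h1]
      exact Prod.ext rfl h2
    have hstart : p2 (γ 0) = p2 (0, y₀) := by simp [p2, hγdef]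
    have hact : actionA c γ 0 t = ε^2 / (2 * t) := by
      rw [hγdef, line_action, hm]
      field_simp
      ring
    have hmem : sInf (Set.range u) + ε^2 / (2*t) ∈ S := by
      refine ⟨γ, line_pc1 y₀ m t ht.le, hend, ?_⟩
      rw [hstart, hq₀, hact]
    have hSne : S.Nonempty := ⟨_, hmem⟩
    have hSbdd : BddBelow S := ⟨sInf (Set.range u), hlb⟩
    constructor
    · rw [hTlo]; exact le_csInf hSne hlb
    · rw [hTlo]
      refine le_trans (csInf_le hSbdd hmem) ?_
      have h2t : (0:ℝ) < 2 * t := by positivity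
      have hdiv : ε^2 / (2*t) ≤ 1 / (2*t) := by gcongr
      linarith
  refine ⟨key, ?_⟩
  intro yt
  have h2 : Tendsto (fun t : ℝ => sInf (Set.range u) + 1/(2*t)) atTop
      (nhds (sInf (Set.range u) + 0)) := by
    refine tendsto_const_nhds.add ?_
    have h3 : Tendsto (fun t : ℝ => 2*t) atTop atTop :=
      Filter.Tendsto.const_mul_atTop two_pos tendsto_id
    simpa [Function.comp_def, one_div, mul_inv] using tendsto_inv_atTop_zero.comp h3
  rw [add_zero] at h2
  refine tendsto_of_tendsto_of_tendsto_of_le_of_le' tendsto_const_nhds h2 ?_ ?_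
  · filter_upwards [eventually_gt_atTop 0] with t ht using (key yt t ht).1
  · filter_upwards [eventually_gt_atTop 0] with t ht using (key yt t ht).2
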